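/- In a connected simple graph with at least 3 vertices, if a foliage-partition class V_i contains a leaf v (a vertex of degree 1), then V_i consists of v's unique neighbor w together with all leaves adjacent to w. -/

import Mathlib

namespace Foliage

variable {V : Type*}

open Classical in
noncomputable def adjNum (G : SimpleGraph V) (v u : V) : ℕ :=
  if G.Adj v u then 1 else 0

def Rel (G : SimpleGraph V) (v w : V) : Prop :=
  G.Reachable v w ∧
    ∀ u₁ u₂ : V, u₁ ≠ v → u₁ ≠ w → u₂ ≠ v → u₂ ≠ w →
      adjNum G v u₁ * adjNum G w u₂ = adjNum G v u₂ * adjNum G w u₁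

/-- If a foliage class contains a leaf `v` with unique neighbor `w`, then the
class consists of `w` together with all leaves adjacent to `w`. -/
theorem foliage_class_of_leaf [Fintype V] (G : SimpleGraph V)
    (hconn : G.Connected) (hcard : 3 ≤ Fintype.card V)
    (v w : V) (hleaf : (G.neighborSet v).ncard = 1) (hnbr : G.Adj v w) :
    ∀ x : V, Rel G v x ↔
      (x = w ∨ ((G.neighborSet x).ncard = 1 ∧ G.Adj x w)) := by
  classical
  have hvw : G.neighborSet v = {w} := by
    obtain ⟨a, ha⟩ := Set.ncard_eq_one.mp hleaf
    have hw : w ∈ G.neighborSet v := hnbr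
    rw [ha] at hw
    rw [ha, Set.mem_singleton_iff.mp hw]
  have hadjv : ∀ u, G.Adj v u ↔ u = w := by
    intro u
    constructor
    · intro h
      have : u ∈ G.neighborSet v := h
      rwa [hvw, Set.mem_singleton_iff] at this
    · rintro rfl; exact hnbr
  have hvne : v ≠ w := hnbr.ne
  intro x
  constructor
  · rintro ⟨hreach, hrel⟩
    by_cases hxw : x = w
    · left; exact hxw
    by_cases hxv : x = v
    · subst hxv
      right; exact ⟨hleaf, hnbr⟩
    right
    have hxnv : ¬ G.Adj x v := by
      intro h
      exact hxw ((hadjv x).mp h.symm)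
    have key : ∀ u₂, u₂ ≠ v → u₂ ≠ x →
        adjNum G x u₂ = adjNum G v u₂ * adjNum G x w := by
      intro u₂ h1 h2
      have h := hrel w u₂ (Ne.symm hvne) (fun h => hxw h.symm) h1 h2
      simpa [adjNum, hnbr] using h
    have hxwadj : G.Adj x w := by
      by_contra hne
      -- then x has no neighbors, contradicting reachability from v
      have hnone : ∀ u, ¬ G.Adj x u := by
        intro u hu
        by_cases h1 : u = v
        · exact hxnv (h1 ▸ hu)
        by_cases h2 : u = x
        · exact G.loopless.irrefl x (h2 ▸ hu)
        have := key u h1 h2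
        simp [adjNum, hne, hu] at this
      obtain ⟨p⟩ := hreach.symm
      cases p with
      | nil => exact hxv rfl
      | cons h q => exact hnone _ h
    have hnx : G.neighborSet x = {w} := by
      ext u
      simp only [SimpleGraph.mem_neighborSet, Set.mem_singleton_iff]
      constructor
      · intro hu
        by_contra huw
        have h1 : u ≠ v := fun h => hxnv (h ▸ hu)
        have h2 : u ≠ x := fun h => G.loopless.irrefl x (h ▸ hu)
        have := key u h1 h2
        have hvu : ¬ G.Adj v u := fun h => huw ((hadjv u).mp h)
        simp [adjNum, hu, hvu] at this
      · rintro rfl; exact hxwadj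
    refine ⟨?_, hxwadj⟩
    rw [hnx]; exact Set.ncard_singleton w
  · rintro (rfl | ⟨hx1, hxw⟩)
    · refine ⟨hnbr.reachable, ?_⟩
      intro u₁ u₂ h1 h2 h3 h4
      have e1 : ¬ G.Adj v u₁ := fun h => h2 ((hadjv u₁).mp h)
      have e2 : ¬ G.Adj v u₂ := fun h => h4 ((hadjv u₂).mp h)
      simp [adjNum, e1, e2]
    · have hnx : G.neighborSet x = {w} := by
        obtain ⟨a, ha⟩ := Set.ncard_eq_one.mp hx1
        have hw : w ∈ G.neighborSet x := hxw
        rw [ha] at hw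
        rw [ha, Set.mem_singleton_iff.mp hw]
      have hadjx : ∀ u, G.Adj x u ↔ u = w := by
        intro u
        constructor
        · intro h
          have : u ∈ G.neighborSet x := h
          rwa [hnx, Set.mem_singleton_iff] at this
        · rintro rfl; exact hxw
      refine ⟨hnbr.reachable.trans hxw.reachable.symm, ?_⟩
      intro u₁ u₂ h1 h2 h3 h4
      have : ∀ u, adjNum G x u = adjNum G v u := by
        intro u
        by_cases h : u = w
        · subst h; simp [adjNum, hxw, hnbr]
        · simp [adjNum, hadjx u, hadjv u, h]
      rw [this u₁, this u₂, mul_comm]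

end Foliage
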